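/- arXiv:2106.11296 — 2 statements merged into one kernel-verified Lean document; each statement's English description precedes it below -/
import Mathlib

section
/- Let G be a finite graph on N vertices with ζ-edge-expansion for some ζ > 0, i.e., every vertex subset S with |S| ≤ N/2 satisfies |E(S, Sᶜ)| ≥ ζ|S|. Let π be the Ising measure at inverse temperature β on G. Then for every 0 < ε < 1, the probability under π that the magnetization M(σ) = Σ_v σ_v lies in [−εN, εN] is at most 2^{N+1} · exp(−βζ(1−ε)N/2). In particular, for β > (2 log 2 + 1)·2/(ζ(1−ε)), this probability is at most e^{−N}. -/
variable {V : Type*} [Fintype V] [DecidableEq V]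

/-- Whether the two endpoints of an (unordered) edge receive different spins. -/
def edgeBichromatic (σ : V → Bool) : Sym2 V → Bool :=
  Sym2.lift ⟨fun u v => σ u != σ v, fun u v => by cases hu : σ u <;> cases hv : σ v <;> simp [hu, hv]⟩

/-- `|C(σ)|`: the number of edges of `G` whose endpoints receive different spins. -/
def cutCount (G : SimpleGraph V) [DecidableRel G.Adj] (σ : V → Bool) : ℕ :=
  (G.edgeFinset.filter (fun e => edgeBichromatic σ e = true)).card

/-- The Ising Gibbs measure `π(σ) = exp(−β|C(σ)|)/Z`. -/
noncomputable def isingMeasure (G : SimpleGraph V) [DecidableRel G.Adj] (β : ℝ)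
    (σ : V → Bool) : ℝ :=
  Real.exp (-β * (cutCount G σ : ℝ)) / ∑ σ' : V → Bool, Real.exp (-β * (cutCount G σ' : ℝ))

/-- The magnetization `M(σ) = Σ_v σ_v` with spins `±1`. -/
def magnetization (σ : V → Bool) : ℤ := ∑ v : V, (if σ v then (1 : ℤ) else -1)

/-- `|E(S,Sᶜ)|`: the number of edges of `G` with exactly one endpoint in `S`
(counted once, oriented from `S` outwards). -/
def edgeBoundaryCard (G : SimpleGraph V) [DecidableRel G.Adj] (S : Finset V) : ℕ :=
  (Finset.univ.filter (fun p : V × V => G.Adj p.1 p.2 ∧ p.1 ∈ S ∧ p.2 ∉ S)).card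

lemma cut_eq_boundary (G : SimpleGraph V) [DecidableRel G.Adj] (σ : V → Bool) (b : Bool) :
    cutCount G σ = edgeBoundaryCard G (Finset.univ.filter (fun v => σ v = b)) := by
  symm
  unfold cutCount edgeBoundaryCard
  refine Finset.card_bij (fun (p : V × V) (_ : p ∈ _) => Sym2.mk p.1 p.2) ?_ ?_ ?_
  · rintro ⟨u, v⟩ hp
    simp only [Finset.mem_filter, Finset.mem_univ, true_and] at hp ⊢
    obtain ⟨hadj, hu, hv⟩ := hp
    refine ⟨SimpleGraph.mem_edgeFinset.2 hadj, ?_⟩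
    simp only [edgeBichromatic, Sym2.lift_mk]
    cases hub : σ u <;> cases hvb : σ v <;> simp_all
  · rintro ⟨u, v⟩ hp ⟨u', v'⟩ hp' h
    simp only [Finset.mem_filter, Finset.mem_univ, true_and] at hp hp'
    rw [Sym2.mk_eq_mk_iff] at h
    rcases h with h | h
    · exact h
    · have h1 : u = v' := congrArg Prod.fst h
      exact absurd (h1 ▸ hp.2.1) hp'.2.2
  · intro e he
    simp only [Finset.mem_filter] at he
    obtain ⟨he1, he2⟩ := he
    induction e using Sym2.ind with
    | _ u v =>
      rw [SimpleGraph.mem_edgeFinset] at he1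
      simp only [edgeBichromatic, Sym2.lift_mk, bne_iff_ne, ne_eq] at he2
      by_cases hub : σ u = b
      · exact ⟨(u, v), by simp only [Finset.mem_filter, Finset.mem_univ, true_and]; exact ⟨he1, hub, fun h => he2 (hub.trans h.symm)⟩, rfl⟩
      · have hvb : σ v = b := by cases hσu : σ u <;> cases hσv : σ v <;> simp_all
        exact ⟨(v, u), by simp only [Finset.mem_filter, Finset.mem_univ, true_and]; exact ⟨he1.symm, hvb, fun h => he2 (h.trans hvb.symm)⟩, Sym2.eq_swap⟩

lemma filter_false_eq (σ : V → Bool) :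
    Finset.univ.filter (fun v => σ v = false)
      = Finset.univ.filter (fun v => ¬ σ v = true) := by
  apply Finset.filter_congr; intro v _; cases σ v <;> simp

lemma class_card_sum (σ : V → Bool) :
    (Finset.univ.filter (fun v => σ v = true)).card
      + (Finset.univ.filter (fun v => σ v = false)).card = Fintype.card V := by
  rw [filter_false_eq, Finset.card_filter_add_card_filter_not]
  rfl

lemma magnetization_eq (σ : V → Bool) :
    magnetization σ = ((Finset.univ.filter (fun v => σ v = true)).card : ℤ)
      - ((Finset.univ.filter (fun v => σ v = false)).card : ℤ) := by
  unfold magnetization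
  rw [← Finset.sum_filter_add_sum_filter_not Finset.univ (fun v => σ v = true)]
  have h1 : ∑ v ∈ Finset.univ.filter (fun v => σ v = true), (if σ v then (1:ℤ) else -1)
      = ((Finset.univ.filter (fun v => σ v = true)).card : ℤ) := by
    have h : ∀ v ∈ Finset.univ.filter (fun v => σ v = true),
        (if σ v then (1:ℤ) else -1) = 1 := fun v hv => by
      simp only [Finset.mem_filter] at hv; simp [hv.2]
    rw [Finset.sum_congr rfl h, Finset.sum_const, nsmul_eq_mul, mul_one]
  have h2 : ∑ v ∈ Finset.univ.filter (fun v => ¬ σ v = true), (if σ v then (1:ℤ) else -1)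
      = -((Finset.univ.filter (fun v => σ v = false)).card : ℤ) := by
    have h : ∀ v ∈ Finset.univ.filter (fun v => ¬ σ v = true),
        (if σ v then (1:ℤ) else -1) = -1 := fun v hv => by
      simp only [Finset.mem_filter] at hv; simp [hv.2]
    rw [Finset.sum_congr rfl h, Finset.sum_const, ← filter_false_eq]
    simp
  rw [h1, h2]; ring



/-- **Magnetization bottleneck on expanders.** If the `N`-vertex graph `G` has
`ζ`-edge-expansion, then for every `0 < ε < 1` the Ising probability that the
magnetization lies in `[−εN, εN]` is at most `2^{N+1}·exp(−βζ(1−ε)N/2)`; in particular,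
for `β > (2 log 2 + 1)·2/(ζ(1−ε))` this probability is at most `e^{−N}`. -/

theorem ising_magnetization_bottleneck
    (G : SimpleGraph V) [DecidableRel G.Adj] (β ζ ε : ℝ)
    (hζ : 0 < ζ) (hβ : 0 < β) (hε₀ : 0 < ε) (hε₁ : ε < 1)
    (hexp : ∀ S : Finset V, (S.card : ℝ) ≤ (Fintype.card V : ℝ) / 2 →
      ζ * (S.card : ℝ) ≤ (edgeBoundaryCard G S : ℝ)) :
    (∑ σ ∈ Finset.univ.filter
        (fun σ : V → Bool => |(magnetization σ : ℝ)| ≤ ε * (Fintype.card V : ℝ)),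
      isingMeasure G β σ)
      ≤ 2 ^ (Fintype.card V + 1) *
          Real.exp (-β * ζ * (1 - ε) * (Fintype.card V : ℝ) / 2)
    ∧ (β > (2 * Real.log 2 + 1) * 2 / (ζ * (1 - ε)) →
        (∑ σ ∈ Finset.univ.filter
            (fun σ : V → Bool => |(magnetization σ : ℝ)| ≤ ε * (Fintype.card V : ℝ)),
          isingMeasure G β σ) ≤ Real.exp (-(Fintype.card V : ℝ))) := by
  set N := Fintype.card V with hN
  set E : ℝ := Real.exp (-β * ζ * (1 - ε) * (N : ℝ) / 2) with hE
  -- Z ≥ 1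
  have hZ1 : (1:ℝ) ≤ ∑ σ' : V → Bool, Real.exp (-β * (cutCount G σ' : ℝ)) := by
    have h0 : cutCount G (fun _ => true) = 0 := by
      unfold cutCount
      rw [Finset.card_eq_zero, Finset.filter_eq_empty_iff]
      intro e _
      induction e using Sym2.ind with
      | _ u v => simp [edgeBichromatic]
    have h := Finset.single_le_sum
      (f := fun σ' : V → Bool => Real.exp (-β * (cutCount G σ' : ℝ)))
      (fun i _ => (Real.exp_pos _).le) (Finset.mem_univ (fun _ : V => true))
    simpa [h0] using h
  -- per-configuration bound
  have key : ∀ σ ∈ Finset.univ.filter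
      (fun σ : V → Bool => |(magnetization σ : ℝ)| ≤ ε * (N : ℝ)),
      isingMeasure G β σ ≤ E := by
    intro σ hσ
    simp only [Finset.mem_filter, Finset.mem_univ, true_and] at hσ
    set T := Finset.univ.filter (fun v => σ v = true) with hT
    set F := Finset.univ.filter (fun v => σ v = false) with hF
    have hTF : T.card + F.card = N := class_card_sum σ
    have hM : magnetization σ = (T.card : ℤ) - (F.card : ℤ) := magnetization_eq σ
    rw [abs_le] at hσ
    have hMcast : (magnetization σ : ℝ) = (T.card : ℝ) - (F.card : ℝ) := by
      rw [hM]; push_cast; ring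
    have hTFcast : (T.card : ℝ) + (F.card : ℝ) = (N : ℝ) := by exact_mod_cast hTF
    have hTlb : (1 - ε) * (N : ℝ) / 2 ≤ (T.card : ℝ) := by nlinarith [hσ.1, hMcast ▸ hσ.1]
    have hFlb : (1 - ε) * (N : ℝ) / 2 ≤ (F.card : ℝ) := by nlinarith [hσ.2, hMcast ▸ hσ.2]
    have hcut : ζ * (1 - ε) * (N : ℝ) / 2 ≤ (cutCount G σ : ℝ) := by
      rcases le_total T.card F.card with h | h
      · have hS : (T.card : ℝ) ≤ (N : ℝ) / 2 := by
          have : (T.card : ℝ) ≤ (F.card : ℝ) := by exact_mod_cast h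
          linarith
        have := hexp T hS
        rw [cut_eq_boundary G σ true, ← hT]
        nlinarith
      · have hS : (F.card : ℝ) ≤ (N : ℝ) / 2 := by
          have : (F.card : ℝ) ≤ (T.card : ℝ) := by exact_mod_cast h
          linarith
        have := hexp F hS
        rw [cut_eq_boundary G σ false, ← hF]
        nlinarith
    calc isingMeasure G β σ
        ≤ Real.exp (-β * (cutCount G σ : ℝ)) :=
          div_le_self (Real.exp_pos _).le hZ1
      _ ≤ E := by rw [hE]; apply Real.exp_le_exp.2; nlinarith
  have hsum : (∑ σ ∈ Finset.univ.filter
      (fun σ : V → Bool => |(magnetization σ : ℝ)| ≤ ε * (N : ℝ)),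
      isingMeasure G β σ) ≤ (2 : ℝ) ^ N * E := by
    calc _ ≤ (Finset.univ.filter
          (fun σ : V → Bool => |(magnetization σ : ℝ)| ≤ ε * (N : ℝ))).card • E :=
        Finset.sum_le_card_nsmul _ _ _ key
    _ = ((Finset.univ.filter
          (fun σ : V → Bool => |(magnetization σ : ℝ)| ≤ ε * (N : ℝ))).card : ℝ) * E :=
        nsmul_eq_mul _ _
    _ ≤ (2 : ℝ) ^ N * E := by
        apply mul_le_mul_of_nonneg_right _ (Real.exp_pos _).le
        have h1 : (Finset.univ.filter
            (fun σ : V → Bool => |(magnetization σ : ℝ)| ≤ ε * (N : ℝ))).card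
            ≤ Fintype.card (V → Bool) := by
          rw [← Finset.card_univ]; exact Finset.card_filter_le _ _
        have h2 : Fintype.card (V → Bool) = 2 ^ N := by
          rw [Fintype.card_fun, Fintype.card_bool]
        rw [h2] at h1
        exact_mod_cast h1
  constructor
  · refine hsum.trans ?_
    apply mul_le_mul_of_nonneg_right _ (Real.exp_pos _).le
    apply pow_le_pow_right₀ (by norm_num)
    omega
  · intro hβ2
    refine hsum.trans ?_
    have hx : 0 < ζ * (1 - ε) := by nlinarith
    have hβx : (2 * Real.log 2 + 1) * 2 < β * (ζ * (1 - ε)) := by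
      rw [gt_iff_lt, div_lt_iff₀ hx] at hβ2
      linarith
    have h2N : (2 : ℝ) ^ N = Real.exp ((N : ℝ) * Real.log 2) := by
      rw [Real.exp_nat_mul, Real.exp_log (by norm_num : (0:ℝ) < 2)]
    rw [h2N, hE, ← Real.exp_add]
    apply Real.exp_le_exp.2
    have hlog2 : 0 ≤ Real.log 2 := Real.log_nonneg (by norm_num)
    have hNnn : (0 : ℝ) ≤ (N : ℝ) := Nat.cast_nonneg _
    nlinarith [mul_nonneg (sub_nonneg.2 hβx.le) hNnn]
end

section
/- In the Edwards–Sokal coupling for the q=2 random-cluster model on a finite graph G: sample ω from the random-cluster measure φ(ω) ∝ p^{|ω|}(1−p)^{|E|−|ω|} 2^{#Comp(ω)} with p = 1 − e^{−β}, then color each connected component of ω independently +1 or −1 with probability 1/2 each, and set σ_v equal to the color of the component of v. Then the marginal law of σ is the Ising measure π(σ) ∝ exp(−β|C(σ)|), where C(σ) is the set of edges with differently-colored endpoints. -/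
section

variable {V : Type*} [Fintype V] [DecidableEq V]

/-- The spanning subgraph `(V, ω)` of `G` determined by the open edge set `ω`. -/
def openSubgraph (G : SimpleGraph V) (ω : Finset (Sym2 V)) : SimpleGraph V where
  Adj u v := G.Adj u v ∧ s(u, v) ∈ ω
  symm := ⟨fun u v h => ⟨h.1.symm, by rw [Sym2.eq_swap]; exact h.2⟩⟩
  loopless := ⟨fun u h => G.loopless.irrefl u h.1⟩

/-- `#Comp(ω)`: the number of connected components of the subgraph `(V, ω)`. -/
noncomputable def compCount (G : SimpleGraph V) (ω : Finset (Sym2 V)) : ℕ :=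
  Nat.card (openSubgraph G ω).ConnectedComponent

/-- The `q = 2` random-cluster weight `p^{|ω|}(1−p)^{|E|−|ω|} 2^{#Comp(ω)}`. -/
noncomputable def rcWeight (G : SimpleGraph V) [DecidableRel G.Adj] (p : ℝ)
    (ω : Finset (Sym2 V)) : ℝ :=
  p ^ ω.card * (1 - p) ^ (G.edgeFinset.card - ω.card) * 2 ^ compCount G ω

/-- Every open edge of `ω` is monochromatic under `σ`. -/
def compatible (σ : V → Bool) (ω : Finset (Sym2 V)) : Prop :=
  ∀ e ∈ ω, edgeBichromatic σ e = false

end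

section ESAux

variable {V : Type*} [Fintype V] [DecidableEq V]

lemma ES.sum_powerset_binom {α : Type*} [DecidableEq α] (s : Finset α) (p : ℝ) :
    ∑ t ∈ s.powerset, p ^ t.card * (1 - p) ^ (s.card - t.card) = 1 := by
  have h := Finset.prod_add (fun _ : α => p) (fun _ : α => (1 - p)) s
  simp only [Finset.prod_const, add_sub_cancel, one_pow] at h
  refine Eq.trans (Finset.sum_congr rfl fun t ht => ?_) h.symm
  rw [Finset.card_sdiff_of_subset (Finset.mem_powerset.mp ht)]

lemma ES.edgeBichromatic_mk (σ : V → Bool) (u v : V) :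
    edgeBichromatic σ s(u, v) = (σ u != σ v) := rfl

lemma ES.compatible_iff_reachable (G : SimpleGraph V) [DecidableRel G.Adj]
    (σ : V → Bool) (ω : Finset (Sym2 V)) (hω : ω ⊆ G.edgeFinset) :
    compatible σ ω ↔ ∀ u v, (openSubgraph G ω).Reachable u v → σ u = σ v := by
  constructor
  · intro h u v hr
    obtain ⟨w⟩ := hr
    induction w with
    | nil => rfl
    | cons ha p ih =>
      have h1 := h _ ha.2
      rw [ES.edgeBichromatic_mk, bne_eq_false_iff_eq] at h1
      exact h1.trans ih
  · intro h e he
    induction e using Sym2.ind with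
    | _ u v =>
      have hadj : G.Adj u v := by
        have := hω he
        rwa [SimpleGraph.mem_edgeFinset, SimpleGraph.mem_edgeSet] at this
      rw [ES.edgeBichromatic_mk, bne_eq_false_iff_eq]
      exact h u v (SimpleGraph.Adj.reachable ⟨hadj, he⟩)

open Classical in
noncomputable def ES.compatEquiv (G : SimpleGraph V) [DecidableRel G.Adj]
    (ω : Finset (Sym2 V)) (hω : ω ⊆ G.edgeFinset) :
    {σ : V → Bool // compatible σ ω} ≃ ((openSubgraph G ω).ConnectedComponent → Bool) where
  toFun σ c := σ.1 c.out
  invFun g := ⟨fun v => g ((openSubgraph G ω).connectedComponentMk v), by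
    rw [ES.compatible_iff_reachable G _ ω hω]
    intro u v hr
    exact congrArg g (SimpleGraph.ConnectedComponent.sound hr)⟩
  left_inv σ := by
    ext v
    refine (ES.compatible_iff_reachable G σ.1 ω hω).mp σ.2 _ _ ?_
    exact (SimpleGraph.ConnectedComponent.eq).mp
      (Quot.out_eq ((openSubgraph G ω).connectedComponentMk v))
  right_inv g := by
    funext c
    exact congrArg g (Quot.out_eq c)

open Classical in
lemma ES.card_compatible (G : SimpleGraph V) [DecidableRel G.Adj]
    (ω : Finset (Sym2 V)) (hω : ω ⊆ G.edgeFinset) :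
    (Finset.univ.filter (fun σ : V → Bool => compatible σ ω)).card
      = 2 ^ compCount G ω := by
  classical
  rw [← Fintype.card_subtype]
  rw [Fintype.card_congr (ES.compatEquiv G ω hω)]
  have : Nonempty (Fintype ((openSubgraph G ω).ConnectedComponent)) :=
    ⟨Fintype.ofFinite _⟩
  rw [Fintype.card_fun, Fintype.card_bool, compCount, Nat.card_eq_fintype_card]

open Classical in
lemma ES.numerator_eq (G : SimpleGraph V) [DecidableRel G.Adj] (β : ℝ)
    (σ : V → Bool) :
    (∑ ω ∈ G.edgeFinset.powerset,
        rcWeight G (1 - Real.exp (-β)) ω *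
          (if compatible σ ω then ((1 : ℝ)/2) ^ compCount G ω else 0))
      = Real.exp (-β * (cutCount G σ : ℝ)) := by
  classical
  set q : ℝ := Real.exp (-β) with hq
  have step1 : ∀ ω ∈ G.edgeFinset.powerset,
      rcWeight G (1 - q) ω *
          (if compatible σ ω then ((1 : ℝ)/2) ^ compCount G ω else 0)
        = if compatible σ ω then
            (1 - q) ^ ω.card * q ^ (G.edgeFinset.card - ω.card) else 0 := by
    intro ω _
    rw [mul_ite, mul_zero, rcWeight]
    congr 1
    have h2 : (2 : ℝ) ^ compCount G ω * ((1 : ℝ)/2) ^ compCount G ω = 1 := by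
      rw [← mul_pow]; norm_num
    rw [mul_assoc, h2, mul_one, sub_sub_cancel]
  rw [Finset.sum_congr rfl step1, Finset.sum_ite, Finset.sum_const_zero, add_zero]
  set M : Finset (Sym2 V) :=
    G.edgeFinset.filter (fun e => edgeBichromatic σ e = false) with hM
  have hfil : G.edgeFinset.powerset.filter (fun ω => compatible σ ω) = M.powerset := by
    ext ω
    rw [Finset.mem_filter, Finset.mem_powerset, Finset.mem_powerset]
    constructor
    · rintro ⟨h1, h2⟩ e he
      exact Finset.mem_filter.mpr ⟨h1 he, h2 e he⟩
    · intro h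
      exact ⟨fun e he => (Finset.mem_filter.mp (h he)).1,
        fun e he => (Finset.mem_filter.mp (h he)).2⟩
  rw [hfil]
  have hME : M ⊆ G.edgeFinset := Finset.filter_subset _ _
  have hcard : M.card + cutCount G σ = G.edgeFinset.card := by
    rw [cutCount, hM]
    have hpart := Finset.card_filter_add_card_filter_not
      (s := G.edgeFinset) (p := fun e => edgeBichromatic σ e = false)
    have h2 : Finset.filter (fun a => ¬edgeBichromatic σ a = false) G.edgeFinset
        = Finset.filter (fun e => edgeBichromatic σ e = true) G.edgeFinset := by
      apply Finset.filter_congr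
      intro e _
      simp
    rw [h2] at hpart
    exact hpart
  have key : ∀ ω ∈ M.powerset,
      (1 - q) ^ ω.card * q ^ (G.edgeFinset.card - ω.card)
        = q ^ cutCount G σ * ((1 - q) ^ ω.card * q ^ (M.card - ω.card)) := by
    intro ω hω
    have hωM : ω ⊆ M := Finset.mem_powerset.mp hω
    have h1 : G.edgeFinset.card - ω.card = cutCount G σ + (M.card - ω.card) := by
      have hc := Finset.card_le_card hωM
      omega
    rw [h1, pow_add]; ring
  rw [Finset.sum_congr rfl key, ← Finset.mul_sum]
  have hbin : ∑ ω ∈ M.powerset, (1 - q) ^ ω.card * q ^ (M.card - ω.card) = 1 := by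
    have := ES.sum_powerset_binom (s := M) (p := 1 - q)
    simpa using this
  rw [hbin, mul_one, hq, ← Real.exp_nat_mul]
  ring_nf

open Classical in
lemma ES.denom_eq (G : SimpleGraph V) [DecidableRel G.Adj] (β : ℝ) :
    (∑ ω ∈ G.edgeFinset.powerset, rcWeight G (1 - Real.exp (-β)) ω)
      = ∑ σ : V → Bool, Real.exp (-β * (cutCount G σ : ℝ)) := by
  classical
  have step1 : ∀ ω ∈ G.edgeFinset.powerset,
      rcWeight G (1 - Real.exp (-β)) ω
        = ∑ σ : V → Bool, rcWeight G (1 - Real.exp (-β)) ω *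
            (if compatible σ ω then ((1 : ℝ)/2) ^ compCount G ω else 0) := by
    intro ω hω
    rw [← Finset.mul_sum, Finset.sum_ite, Finset.sum_const_zero, add_zero,
      Finset.sum_const, nsmul_eq_mul, ES.card_compatible G ω (Finset.mem_powerset.mp hω)]
    have : ((2 : ℝ) ^ compCount G ω) * ((1 : ℝ)/2) ^ compCount G ω = 1 := by
      rw [← mul_pow]; norm_num
    push_cast
    rw [this, mul_one]
  rw [Finset.sum_congr rfl step1, Finset.sum_comm]
  exact Finset.sum_congr rfl fun σ _ => ES.numerator_eq G β σ

end ESAux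

open Classical in
/-- **Edwards–Sokal identity.** Sample `ω ⊆ E` from the `q = 2` random-cluster measure
with `p = 1 − e^{−β}` and color each connected component of `(V, ω)` independently
`±1` with probability `1/2` each; the component coloring yields the spin configuration
`σ` with probability `(1/2)^{#Comp(ω)}` if every open edge is monochromatic under `σ`,
and `0` otherwise. The resulting marginal law of `σ` is the Ising measure
`π(σ) ∝ exp(−β|C(σ)|)`. -/
theorem edwards_sokal_marginal
    {V : Type*} [Fintype V] [DecidableEq V]
    (G : SimpleGraph V) [DecidableRel G.Adj] (β : ℝ) (hβ : 0 < β) :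
    ∀ σ : V → Bool,
      (∑ ω ∈ G.edgeFinset.powerset,
          rcWeight G (1 - Real.exp (-β)) ω *
            (if compatible σ ω then ((1 : ℝ)/2) ^ compCount G ω else 0))
        / (∑ ω ∈ G.edgeFinset.powerset, rcWeight G (1 - Real.exp (-β)) ω)
      = Real.exp (-β * (cutCount G σ : ℝ))
        / (∑ σ' : V → Bool, Real.exp (-β * (cutCount G σ' : ℝ))) := by
  intro σ
  rw [ES.numerator_eq G β σ, ES.denom_eq G β]
end
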